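/- Let d ≥ 3 and let f : ℝ^d → ℝ be a bounded non-negative Borel function with bounded support. Then the Siegel transform f̂ satisfies ‖f̂‖²_{L²(X,μ)} ≤ ‖f‖₁² + 2 (ζ(d/2)²/ζ(d)) ‖f‖₂², where ‖f‖₁, ‖f‖₂ are the L¹ and L² norms of f on ℝ^d. -/

import Mathlib

open Set MeasureTheory

noncomputable section

/-- The Riemann zeta function at a real argument, `ζ(s) = Σ_{n ≥ 1} n^{-s}`. -/
def zetaR (s : ℝ) : ℝ := ∑' n : ℕ, 1 / ((n : ℝ) + 1) ^ s

/-- The Siegel transform `f̂(Λ) = Σ_{z ∈ Λ \ {0}} f(z)` of a function `f : ℝ^d → ℝ`,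
where `Λ` is a lattice (additive subgroup) of `ℝ^d`. -/
def siegel {d : ℕ} (Λ : AddSubgroup (EuclideanSpace ℝ (Fin d)))
    (f : EuclideanSpace ℝ (Fin d) → ℝ) : ℝ :=
  ∑' z : {v : EuclideanSpace ℝ (Fin d) // v ∈ Λ ∧ v ≠ 0}, f z


lemma aux_integrable {d : ℕ} {f : EuclideanSpace ℝ (Fin d) → ℝ} (hm : Measurable f)
    {C R : ℝ} (hC : ∀ v, ‖f v‖ ≤ C) (hR : ∀ v, f v ≠ 0 → ‖v‖ ≤ R) :
    Integrable f := by
  have hf_eq : f = (Metric.closedBall (0 : EuclideanSpace ℝ (Fin d)) R).indicator f := by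
    funext v
    by_cases h : f v = 0
    · simp [Set.indicator, h]
    · have hv : v ∈ Metric.closedBall (0 : EuclideanSpace ℝ (Fin d)) R := by
        simpa [Metric.mem_closedBall, dist_zero_right] using hR v h
      simp [Set.indicator, hv]
  rw [hf_eq]
  refine (Measure.integrableOn_of_bounded (M := C) ?_ hm.aestronglyMeasurable ?_).integrable_indicator
    measurableSet_closedBall
  · exact measure_closedBall_lt_top.ne
  · exact Filter.Eventually.of_forall fun v => hC v

lemma aux_sq_smul {d : ℕ} (f : EuclideanSpace ℝ (Fin d) → ℝ) {a : ℝ} (ha : 0 ≤ a) :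
    ∫ v, f (a • v) ^ 2 = (a ^ d)⁻¹ * ∫ v, f v ^ 2 := by
  have h := MeasureTheory.Measure.integral_comp_smul
    (volume : Measure (EuclideanSpace ℝ (Fin d))) (fun v => f v ^ 2) a
  simpa [finrank_euclideanSpace_fin, abs_of_nonneg (inv_nonneg.2 (pow_nonneg ha d)),
    smul_eq_mul] using h

lemma aux_memL2 {d : ℕ} {f : EuclideanSpace ℝ (Fin d) → ℝ}
    (hfm : Measurable f) (hfnn : ∀ v, 0 ≤ f v)
    {Cf Rf : ℝ} (hCf : ∀ v, f v ≤ Cf) (hRf : ∀ v, f v ≠ 0 → ‖v‖ ≤ Rf)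
    {a : ℝ} (ha : 1 ≤ a) :
    MemLp (fun v => f (a • v)) (ENNReal.ofReal 2)
      (volume : Measure (EuclideanSpace ℝ (Fin d))) := by
  have ha0 : (0:ℝ) < a := lt_of_lt_of_le one_pos ha
  have hmeas : Measurable fun v : EuclideanSpace ℝ (Fin d) => f (a • v) :=
    hfm.comp (measurable_const_smul a)
  have hsupp : ∀ v : EuclideanSpace ℝ (Fin d), f (a • v) ≠ 0 → ‖v‖ ≤ Rf := by
    intro v hv
    have h1 : ‖a • v‖ ≤ Rf := hRf _ hv
    have h2 : ‖v‖ ≤ ‖a • v‖ := by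
      rw [norm_smul, Real.norm_eq_abs, abs_of_pos ha0]
      exact le_mul_of_one_le_left (norm_nonneg v) ha
    linarith
  have hint : Integrable (fun v : EuclideanSpace ℝ (Fin d) => f (a • v) ^ 2) := by
    refine aux_integrable (hmeas.pow_const 2) (C := Cf ^ 2) (R := Rf) ?_ ?_
    · intro v
      rw [Real.norm_eq_abs, abs_of_nonneg (sq_nonneg _)]
      exact pow_le_pow_left₀ (hfnn _) (hCf _) 2
    · intro v hv
      exact hsupp v (by intro h; exact hv (by rw [h]; ring))
  have h2 : (ENNReal.ofReal 2) = (2 : ENNReal) := by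
    simp [ENNReal.ofReal_ofNat]
  rw [h2]
  exact (memLp_two_iff_integrable_sq hmeas.aestronglyMeasurable).2 hint

lemma aux_CS {d : ℕ} {f g : EuclideanSpace ℝ (Fin d) → ℝ}
    (hfm : Measurable f) (hgm : Measurable g)
    (hfnn : ∀ v, 0 ≤ f v) (hgnn : ∀ v, 0 ≤ g v)
    {Cf Cg Rf Rg : ℝ} (hCf : ∀ v, f v ≤ Cf) (hCg : ∀ v, g v ≤ Cg)
    (hRf : ∀ v, f v ≠ 0 → ‖v‖ ≤ Rf) (hRg : ∀ v, g v ≠ 0 → ‖v‖ ≤ Rg)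
    {a b : ℝ} (ha : 1 ≤ a) (hb : 1 ≤ b) :
    ∫ v, f (a • v) * g (b • v)
      ≤ a ^ (-(d:ℝ)/2) * b ^ (-(d:ℝ)/2)
          * (Real.sqrt (∫ v, f v ^ 2) * Real.sqrt (∫ v, g v ^ 2)) := by
  have ha0 : (0:ℝ) < a := lt_of_lt_of_le one_pos ha
  have hb0 : (0:ℝ) < b := lt_of_lt_of_le one_pos hb
  have hconj : Real.HolderConjugate 2 2 := Real.holderConjugate_iff.mpr ⟨one_lt_two, by norm_num⟩
  have hH := MeasureTheory.integral_mul_le_Lp_mul_Lq_of_nonneg hconj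
    (f := fun v : EuclideanSpace ℝ (Fin d) => f (a • v))
    (g := fun v : EuclideanSpace ℝ (Fin d) => g (b • v))
    (Filter.Eventually.of_forall fun v => hfnn _)
    (Filter.Eventually.of_forall fun v => hgnn _)
    (aux_memL2 hfm hfnn hCf hRf ha) (aux_memL2 hgm hgnn hCg hRg hb)
  have hrpow : ∀ x : ℝ, x ^ (2:ℝ) = x ^ 2 := fun x => by
    rw [show (2:ℝ) = ((2:ℕ):ℝ) by norm_num, Real.rpow_natCast]
  simp only [hrpow] at hH
  rw [aux_sq_smul f ha0.le, aux_sq_smul g hb0.le] at hH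
  refine hH.trans (le_of_eq ?_)
  have hS2f : (0:ℝ) ≤ ∫ v, f v ^ 2 := integral_nonneg fun v => sq_nonneg _
  have hS2g : (0:ℝ) ≤ ∫ v, g v ^ 2 := integral_nonneg fun v => sq_nonneg _
  have key : ∀ c : ℝ, 1 ≤ c → ∀ S : ℝ, 0 ≤ S →
      ((c ^ d)⁻¹ * S) ^ (1/(2:ℝ)) = c ^ (-(d:ℝ)/2) * Real.sqrt S := by
    intro c hc S hS
    have hc0 : (0:ℝ) < c := lt_of_lt_of_le one_pos hc
    rw [← Real.sqrt_eq_rpow, Real.sqrt_mul (inv_nonneg.2 (pow_nonneg hc0.le d)),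
      Real.sqrt_eq_rpow ((c ^ d)⁻¹), ← Real.rpow_natCast c d,
      ← Real.rpow_neg hc0.le, ← Real.rpow_mul hc0.le]
    ring_nf
  rw [key a ha _ hS2f, key b hb _ hS2g]
  ring

lemma aux_sum_bound {d : ℕ} (hd : 3 ≤ d) {f : EuclideanSpace ℝ (Fin d) → ℝ}
    (hfmeas : Measurable f) (hfnn : ∀ v, 0 ≤ f v)
    {C R : ℝ} (hC : ∀ v, f v ≤ C) (hR : ∀ v, f v ≠ 0 → ‖v‖ ≤ R) :
    ∑' (p : ℕ) (q : ℕ),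
        ((∫ v, f (((p : ℝ) + 1) • v) * f (((q : ℝ) + 1) • v))
          + ∫ v, f (((p : ℝ) + 1) • v) * f (-(((q : ℝ) + 1) • v)))
      ≤ 2 * (zetaR ((d : ℝ) / 2)) ^ 2 * ∫ v, (f v) ^ 2 := by
  set S2 := ∫ v, f v ^ 2 with hS2def
  have hS2 : 0 ≤ S2 := integral_nonneg fun v => sq_nonneg _
  set w : ℕ → ℝ := fun n => ((n : ℝ) + 1) ^ (-(d:ℝ)/2) with hwdef
  have hwnn : ∀ n, 0 ≤ w n := fun n => Real.rpow_nonneg (by positivity) _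
  have hwsum : Summable w := by
    have h0 : Summable (fun n : ℕ => (n : ℝ) ^ (-(d:ℝ)/2)) := by
      refine Real.summable_nat_rpow.2 ?_
      have : (3:ℝ) ≤ (d:ℝ) := by exact_mod_cast hd
      linarith
    have h1 := (summable_nat_add_iff 1).2 h0
    refine h1.congr fun n => ?_
    have : (((n + 1 : ℕ)) : ℝ) = (n : ℝ) + 1 := by push_cast; ring
    rw [this]
  have hZ : zetaR ((d:ℝ)/2) = ∑' n, w n := by
    refine tsum_congr fun n => ?_
    have he : (-(d:ℝ)/2) = -((d:ℝ)/2) := by ring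
    show 1 / ((n:ℝ) + 1) ^ ((d:ℝ)/2) = ((n:ℝ) + 1) ^ (-(d:ℝ)/2)
    rw [he, Real.rpow_neg (by positivity), one_div]
  set Z := ∑' n, w n with hZdef
  have hZnn : 0 ≤ Z := tsum_nonneg hwnn
  -- the negated function
  set g : EuclideanSpace ℝ (Fin d) → ℝ := fun v => f (-v) with hgdef
  have hgm : Measurable g := hfmeas.comp measurable_neg
  have hgnn : ∀ v, 0 ≤ g v := fun v => hfnn _
  have hgC : ∀ v, g v ≤ C := fun v => hC _
  have hgR : ∀ v, g v ≠ 0 → ‖v‖ ≤ R := fun v hv => by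
    simpa [norm_neg] using hR (-v) hv
  have hgS2 : (∫ v, g v ^ 2) = S2 := by
    rw [hS2def, hgdef]
    exact MeasureTheory.integral_neg_eq_self (fun v => f v ^ 2) volume
  -- per-term bound
  set T : ℕ → ℕ → ℝ := fun p q =>
    ((∫ v, f (((p : ℝ) + 1) • v) * f (((q : ℝ) + 1) • v))
      + ∫ v, f (((p : ℝ) + 1) • v) * f (-(((q : ℝ) + 1) • v))) with hTdef
  have hone : ∀ n : ℕ, (1:ℝ) ≤ (n : ℝ) + 1 := fun n => by
    have : (0:ℝ) ≤ (n:ℝ) := Nat.cast_nonneg n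
    linarith
  have hTnn : ∀ p q, 0 ≤ T p q := by
    intro p q
    have h1 : 0 ≤ ∫ v, f (((p : ℝ) + 1) • v) * f (((q : ℝ) + 1) • v) :=
      integral_nonneg fun v => mul_nonneg (hfnn _) (hfnn _)
    have h2 : 0 ≤ ∫ v, f (((p : ℝ) + 1) • v) * f (-(((q : ℝ) + 1) • v)) :=
      integral_nonneg fun v => mul_nonneg (hfnn _) (hfnn _)
    exact add_nonneg h1 h2
  have hTbound : ∀ p q, T p q ≤ (2 * w p * S2) * w q := by
    intro p q
    have hb1 : ∫ v, f (((p : ℝ) + 1) • v) * f (((q : ℝ) + 1) • v)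
        ≤ w p * w q * S2 := by
      have := aux_CS (d := d) hfmeas hfmeas hfnn hfnn hC hC hR hR
        (hone p) (hone q)
      calc ∫ v, f (((p : ℝ) + 1) • v) * f (((q : ℝ) + 1) • v)
          ≤ ((p:ℝ)+1) ^ (-(d:ℝ)/2) * ((q:ℝ)+1) ^ (-(d:ℝ)/2)
              * (Real.sqrt S2 * Real.sqrt S2) := this
        _ = w p * w q * S2 := by
            rw [Real.mul_self_sqrt hS2]
    have hb2 : ∫ v, f (((p : ℝ) + 1) • v) * f (-(((q : ℝ) + 1) • v))
        ≤ w p * w q * S2 := by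
      have h2 := aux_CS (d := d) hfmeas hgm hfnn hgnn hC hgC hR hgR
        (hone p) (hone q)
      have heq : (fun v : EuclideanSpace ℝ (Fin d) =>
          f (((p : ℝ) + 1) • v) * f (-(((q : ℝ) + 1) • v)))
          = fun v => f (((p : ℝ) + 1) • v) * g (((q : ℝ) + 1) • v) := rfl
      calc ∫ v, f (((p : ℝ) + 1) • v) * f (-(((q : ℝ) + 1) • v))
          = ∫ v, f (((p : ℝ) + 1) • v) * g (((q : ℝ) + 1) • v) := by rw [heq]
        _ ≤ ((p:ℝ)+1) ^ (-(d:ℝ)/2) * ((q:ℝ)+1) ^ (-(d:ℝ)/2)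
              * (Real.sqrt S2 * Real.sqrt (∫ v, g v ^ 2)) := h2
        _ = w p * w q * S2 := by
            rw [hgS2, Real.mul_self_sqrt hS2]
    calc T p q ≤ w p * w q * S2 + w p * w q * S2 := add_le_add hb1 hb2
      _ = (2 * w p * S2) * w q := by ring
  -- inner sums
  have hMsum : ∀ p : ℕ, Summable (fun q => (2 * w p * S2) * w q) :=
    fun p => hwsum.mul_left _
  have hTsum : ∀ p : ℕ, Summable (fun q => T p q) :=
    fun p => Summable.of_nonneg_of_le (hTnn p) (hTbound p) (hMsum p)
  have hinner : ∀ p : ℕ, (∑' q, T p q) ≤ (2 * S2 * Z) * w p := by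
    intro p
    calc (∑' q, T p q) ≤ ∑' q, (2 * w p * S2) * w q :=
          Summable.tsum_le_tsum (hTbound p) (hTsum p) (hMsum p)
      _ = (2 * w p * S2) * Z := by rw [tsum_mul_left]
      _ = (2 * S2 * Z) * w p := by ring
  have hUnn : ∀ p : ℕ, 0 ≤ ∑' q, T p q := fun p => tsum_nonneg (hTnn p)
  have hUsum : Summable (fun p => ∑' q, T p q) :=
    Summable.of_nonneg_of_le hUnn hinner (hwsum.mul_left _)
  calc (∑' (p : ℕ) (q : ℕ), T p q)
      ≤ ∑' p, (2 * S2 * Z) * w p := Summable.tsum_le_tsum hinner hUsum (hwsum.mul_left _)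
    _ = (2 * S2 * Z) * Z := by rw [tsum_mul_left]
    _ = 2 * (zetaR ((d:ℝ)/2)) ^ 2 * S2 := by rw [hZ]; ring

/-- For `d ≥ 3` and `f : ℝ^d → ℝ` a bounded non-negative Borel function with bounded
support, the Siegel transform satisfies
`‖f̂‖²_{L²(X,μ)} ≤ ‖f‖₁² + 2 (ζ(d/2)²/ζ(d)) ‖f‖₂²`.
Siegel's mean value formula and Rogers' mean-square identity are assumed. -/
theorem siegel_L2_bound (d : ℕ) (hd : 3 ≤ d)
    {X : Type*} [MeasurableSpace X] (μ : Measure X) [IsProbabilityMeasure μ]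
    (lat : X → AddSubgroup (EuclideanSpace ℝ (Fin d)))
    (f : EuclideanSpace ℝ (Fin d) → ℝ) (hfmeas : Measurable f) (hfnn : ∀ v, 0 ≤ f v)
    (hfbdd : ∃ C, ∀ v, f v ≤ C) (hfsupp : ∃ R, ∀ v, f v ≠ 0 → ‖v‖ ≤ R)
    (hSiegel : ∫ x, siegel (lat x) f ∂μ = ∫ v, f v)
    (hRogers : ∫ x, (siegel (lat x) f - ∫ y, siegel (lat y) f ∂μ) ^ 2 ∂μ
      = (1 / zetaR d) * ∑' (p : ℕ) (q : ℕ),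
          ((∫ v, f (((p : ℝ) + 1) • v) * f (((q : ℝ) + 1) • v))
            + ∫ v, f (((p : ℝ) + 1) • v) * f (-(((q : ℝ) + 1) • v)))) :
    ∫ x, (siegel (lat x) f) ^ 2 ∂μ
      ≤ (∫ v, f v) ^ 2 + 2 * (zetaR ((d : ℝ) / 2)) ^ 2 / zetaR d * ∫ v, (f v) ^ 2 := by
  obtain ⟨C, hC⟩ := hfbdd
  obtain ⟨R, hR⟩ := hfsupp
  have hS2 : (0:ℝ) ≤ ∫ v, (f v) ^ 2 := integral_nonneg fun v => sq_nonneg _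
  have hzd : (0:ℝ) ≤ zetaR d := tsum_nonneg fun n => by positivity
  have hrhs_nn : (0:ℝ) ≤ 2 * (zetaR ((d : ℝ) / 2)) ^ 2 / zetaR d * ∫ v, (f v) ^ 2 :=
    mul_nonneg (div_nonneg (by positivity) hzd) hS2
  by_cases hint2 : Integrable (fun x => (siegel (lat x) f) ^ 2) μ
  swap
  · rw [integral_undef hint2]
    exact add_nonneg (sq_nonneg _) hrhs_nn
  · have hgnn : ∀ x, 0 ≤ siegel (lat x) f := fun x => tsum_nonneg fun z => hfnn _
    have h2 : AEStronglyMeasurable (fun x => siegel (lat x) f) μ := by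
      have h1 := Real.continuous_sqrt.comp_aestronglyMeasurable hint2.aestronglyMeasurable
      exact h1.congr (Filter.Eventually.of_forall fun x => Real.sqrt_sq (hgnn x))
    have hint1 : Integrable (fun x => siegel (lat x) f) μ := by
      refine Integrable.mono' (hint2.add (integrable_const 1)) h2
        (Filter.Eventually.of_forall fun x => ?_)
      rw [Real.norm_of_nonneg (hgnn x)]
      simp only [Pi.add_apply]
      nlinarith [hgnn x, sq_nonneg (siegel (lat x) f - 1)]
    set m := ∫ v, f v with hmdef
    have hvar : ∫ x, (siegel (lat x) f - ∫ y, siegel (lat y) f ∂μ) ^ 2 ∂μ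
        = (∫ x, (siegel (lat x) f) ^ 2 ∂μ) - m ^ 2 := by
      rw [hSiegel]
      have e1 : ∫ x, (siegel (lat x) f - m) ^ 2 ∂μ
          = ∫ x, ((siegel (lat x) f) ^ 2 - (2 * m) * siegel (lat x) f + m ^ 2) ∂μ :=
        integral_congr_ae (Filter.Eventually.of_forall fun x => by ring)
      have hmul : Integrable (fun x => 2 * m * siegel (lat x) f) μ := hint1.const_mul (2 * m)
      have hsub : Integrable (fun x => siegel (lat x) f ^ 2 - 2 * m * siegel (lat x) f) μ :=
        hint2.sub hmul
      rw [e1, integral_add hsub (integrable_const (m ^ 2)),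
        integral_sub hint2 hmul, integral_const_mul,
        hSiegel, integral_const]
      simp [measure_univ]
      ring
    have hsum := aux_sum_bound hd hfmeas hfnn hC hR
    have hB : (∫ x, (siegel (lat x) f) ^ 2 ∂μ) - m ^ 2
        ≤ 2 * (zetaR ((d : ℝ) / 2)) ^ 2 / zetaR d * ∫ v, (f v) ^ 2 := by
      rw [← hvar, hRogers]
      calc (1 / zetaR d) * ∑' (p : ℕ) (q : ℕ),
            ((∫ v, f (((p : ℝ) + 1) • v) * f (((q : ℝ) + 1) • v))
              + ∫ v, f (((p : ℝ) + 1) • v) * f (-(((q : ℝ) + 1) • v)))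
          ≤ (1 / zetaR d) * (2 * (zetaR ((d : ℝ) / 2)) ^ 2 * ∫ v, (f v) ^ 2) := by
            exact mul_le_mul_of_nonneg_left hsum (by positivity)
        _ = 2 * (zetaR ((d : ℝ) / 2)) ^ 2 / zetaR d * ∫ v, (f v) ^ 2 := by ring
    linarith
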